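/- Let Ω be a nondegenerate 2-form with values in a line bundle on a manifold of even dimension n = 2m > 2, and fix any Weyl derivative D⁰. If D = D⁰ + γ for a 1-form γ, then the Ω-traces of d^D Ω and d^{D⁰} Ω differ by 2(n−2)γ; hence there is a unique Weyl derivative D such that d^D Ω is trace-free with respect to Ω. -/
import Mathlib


/-- pointwise/framewise model: let `Ω` be a nondegenerate (weightless) `2`-form
on an `n`-manifold, `n = 2m > 2`, with an `Ω`-dual frame `e, e'` (so `Ω(eᵢ, eⱼ') = δᵢⱼ`,
together with the completeness relations expressing nondegeneracy).  The `Ω`-trace of a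
`3`-form `α` is `x ↦ ∑ᵢ α(eᵢ, eᵢ', x)`.  If `D = D⁰ + γ`, so that
`d^D Ω = d^{D⁰} Ω + 2 γ ∧ Ω`, then the `Ω`-traces of `d^D Ω` and `d^{D⁰} Ω` differ by
`2(n-2)γ`; hence there is a unique `1`-form `γ` (i.e. a unique Weyl derivative `D = D⁰ + γ`)
for which `d^D Ω` is trace-free with respect to `Ω`. -/
theorem unique_weyl_derivative_tracefree
    (n m : ℕ) (hm : n = 2 * m) (h2 : 2 < n)
    (V : Type*) [AddCommGroup V] [Module ℝ V] [FiniteDimensional ℝ V]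
    (hdim : Module.finrank ℝ V = n)
    (Ω : V →ₗ[ℝ] V →ₗ[ℝ] ℝ)
    (hΩalt : ∀ x y, Ω x y = - Ω y x)
    (e e' : Fin n → V)
    (hframe : ∀ i j, Ω (e i) (e' j) = if i = j then 1 else 0)
    (hcomp : ∀ x : V, ∑ i, Ω x (e' i) • e i = x)
    (hcomp' : ∀ x : V, ∑ i, Ω (e i) x • e' i = x)
    (γ : V →ₗ[ℝ] ℝ)
    (T T₀ : V → V → V → ℝ)     -- d^D Ω and d^{D⁰} Ω
    (hT : ∀ a b c, T a b c
      = T₀ a b c + 2 * (γ a * Ω b c + γ b * Ω c a + γ c * Ω a b))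
    (hT₀lin : IsLinearMap ℝ (fun x => ∑ i, T₀ (e i) (e' i) x)) :
    (∀ x, ∑ i, T (e i) (e' i) x
        = (∑ i, T₀ (e i) (e' i) x) + 2 * ((n : ℝ) - 2) * γ x) ∧
    (∃! δ : V →ₗ[ℝ] ℝ, ∀ x,
      (∑ i, (T₀ (e i) (e' i) x
        + 2 * (δ (e i) * Ω (e' i) x + δ (e' i) * Ω x (e i) + δ x * Ω (e i) (e' i)))) = 0) := by
  have key : ∀ (δ : V →ₗ[ℝ] ℝ) (x : V),
      ∑ i, (δ (e i) * Ω (e' i) x + δ (e' i) * Ω x (e i) + δ x * Ω (e i) (e' i))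
        = ((n : ℝ) - 2) * δ x := by
    intro δ x
    have h1 : ∑ i, δ (e i) * Ω (e' i) x = - δ x := by
      have hx : δ x = ∑ i, Ω x (e' i) * δ (e i) := by
        conv_lhs => rw [← hcomp x]
        rw [map_sum]
        simp [smul_eq_mul]
      rw [hx, ← Finset.sum_neg_distrib]
      apply Finset.sum_congr rfl
      intro i _
      rw [hΩalt (e' i) x]
      ring
    have h2' : ∑ i, δ (e' i) * Ω x (e i) = - δ x := by
      have hx : δ x = ∑ i, Ω (e i) x * δ (e' i) := by
        conv_lhs => rw [← hcomp' x]
        rw [map_sum]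
        simp [smul_eq_mul]
      rw [hx, ← Finset.sum_neg_distrib]
      apply Finset.sum_congr rfl
      intro i _
      rw [hΩalt x (e i)]
      ring
    have h3 : ∑ i : Fin n, δ x * Ω (e i) (e' i) = (n : ℝ) * δ x := by
      have : ∀ i : Fin n, δ x * Ω (e i) (e' i) = δ x := by
        intro i; rw [hframe i i]; simp
      rw [Finset.sum_congr rfl (fun i _ => this i)]
      simp [mul_comm]
    rw [Finset.sum_add_distrib, Finset.sum_add_distrib, h1, h2', h3]
    ring
  have main : ∀ (δ : V →ₗ[ℝ] ℝ) (x : V),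
      (∑ i, (T₀ (e i) (e' i) x
        + 2 * (δ (e i) * Ω (e' i) x + δ (e' i) * Ω x (e i) + δ x * Ω (e i) (e' i))))
      = (∑ i, T₀ (e i) (e' i) x) + 2 * ((n : ℝ) - 2) * δ x := by
    intro δ x
    rw [Finset.sum_add_distrib, ← Finset.mul_sum, key δ x]
    ring
  have hn2 : ((n : ℝ) - 2) ≠ 0 := by
    have : (2 : ℝ) < (n : ℝ) := by exact_mod_cast h2
    linarith
  constructor
  · intro x
    calc ∑ i, T (e i) (e' i) x
        = ∑ i, (T₀ (e i) (e' i) x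
          + 2 * (γ (e i) * Ω (e' i) x + γ (e' i) * Ω x (e i) + γ x * Ω (e i) (e' i))) := by
          apply Finset.sum_congr rfl; intro i _; exact hT _ _ _
      _ = (∑ i, T₀ (e i) (e' i) x) + 2 * ((n : ℝ) - 2) * γ x := main γ x
  · set f : V →ₗ[ℝ] ℝ := IsLinearMap.mk' _ hT₀lin with hf
    have hfx : ∀ x, f x = ∑ i, T₀ (e i) (e' i) x := fun x => rfl
    refine ⟨(-(1 / (2 * ((n : ℝ) - 2)))) • f, ?_, ?_⟩
    · intro x
      rw [main]
      have : ((-(1 / (2 * ((n : ℝ) - 2)))) • f) x = -(1 / (2 * ((n : ℝ) - 2))) * f x := rfl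
      rw [this, ← hfx x]
      field_simp
      ring
    · intro δ hδ
      ext x
      have := hδ x
      rw [main] at this
      have hval : δ x = -(1 / (2 * ((n : ℝ) - 2))) * f x := by
        rw [hfx x]
        have h2n : 2 * ((n : ℝ) - 2) ≠ 0 := mul_ne_zero two_ne_zero hn2
        field_simp
        linarith [this]
      simpa using hval
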